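/- For a prime p, each coefficient (p!)²/((i!)² (p-i)!) for 1 ≤ i ≤ p-1 is divisible by p², and the coefficient for i = 0, namely p!, is congruent to -p modulo p². Consequently [(d/dx)^p, x^p] ≡ -p (mod p²) in the ring of differential operators on ℤ[x]. -/

import Mathlib

open Polynomial

/-- The operator `d/dx` on `ℤ[x]`. -/
noncomputable def Dop : Module.End ℤ (Polynomial ℤ) := Polynomial.derivative

/-- The operator of multiplication by `x` on `ℤ[x]`. -/
noncomputable def Xop : Module.End ℤ (Polynomial ℤ) :=
  LinearMap.mulLeft ℤ (Polynomial.X : Polynomial ℤ)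

open Finset

private lemma key_num (p n : ℕ) :
    (p + n).descFactorial p =
      ∑ k ∈ range (p + 1), p.choose k ^ 2 * k.factorial * n.descFactorial (p - k) := by
  rw [Nat.descFactorial_eq_factorial_mul_choose, Nat.add_choose_eq,
    Finset.Nat.sum_antidiagonal_eq_sum_range_succ_mk, Finset.mul_sum]
  refine Finset.sum_congr rfl fun k hk => ?_
  have hkp : k ≤ p := Nat.lt_succ_iff.mp (Finset.mem_range.mp hk)
  have h3 : p.choose k * k.factorial * (p - k).factorial = p.factorial :=
    Nat.choose_mul_factorial_mul_factorial hkp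
  calc p.factorial * (p.choose k * n.choose (p - k))
      = (p.choose k * k.factorial * (p - k).factorial) * (p.choose k * n.choose (p - k)) := by
        rw [h3]
    _ = p.choose k ^ 2 * k.factorial * ((p - k).factorial * n.choose (p - k)) := by ring
    _ = _ := by rw [← Nat.descFactorial_eq_factorial_mul_choose]

private lemma Xop_pow_apply (m : ℕ) (f : Polynomial ℤ) : (Xop ^ m) f = X ^ m * f := by
  rw [Xop, LinearMap.pow_mulLeft (R := ℤ) (A := Polynomial ℤ), LinearMap.mulLeft_apply]

private lemma Dop_pow_X_pow (m n : ℕ) :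
    (Dop ^ m) (X ^ n : Polynomial ℤ) = (n.descFactorial m : ℤ) • X ^ (n - m) := by
  rw [Dop, Module.End.pow_apply, Polynomial.iterate_derivative_X_pow_eq_smul]

private lemma term_eq (m n : ℕ) :
    ((n.descFactorial m : ℤ)) • (X ^ (m + (n - m)) : Polynomial ℤ)
      = (n.descFactorial m : ℤ) • X ^ n := by
  rcases le_or_gt m n with h | h
  · rw [Nat.add_sub_cancel' h]
  · rw [Nat.descFactorial_eq_zero_iff_lt.mpr h]; simp

private lemma expand (p : ℕ) :
    Dop ^ p * Xop ^ p =
      ∑ k ∈ range (p + 1),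
        (p.choose k ^ 2 * k.factorial) • (Xop ^ (p - k) * Dop ^ (p - k)) := by
  apply LinearMap.ext
  intro f
  induction f using Polynomial.induction_on' with
  | add f g hf hg => simp only [map_add, hf, hg]
  | monomial n a =>
    rw [← smul_X_eq_monomial]
    simp only [map_smul]
    congr 1
    rw [Module.End.mul_apply, Xop_pow_apply, ← pow_add, Dop_pow_X_pow,
      Nat.add_sub_cancel_left]
    rw [LinearMap.sum_apply]
    have hterm : ∀ k ∈ range (p + 1),
        ((p.choose k ^ 2 * k.factorial) • (Xop ^ (p - k) * Dop ^ (p - k))) (X ^ n)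
          = ((p.choose k ^ 2 * k.factorial * n.descFactorial (p - k) : ℕ) : ℤ) •
              (X ^ n : Polynomial ℤ) := by
      intro k _
      rw [LinearMap.smul_apply, Module.End.mul_apply, Dop_pow_X_pow, map_smul,
        Xop_pow_apply, ← pow_add, term_eq]
      rw [← Nat.cast_smul_eq_nsmul ℤ (p.choose k ^ 2 * k.factorial), smul_smul]
      push_cast
      ring_nf
    rw [Finset.sum_congr rfl hterm, ← Finset.sum_smul]
    rw [← Nat.cast_sum, ← key_num]

/-- For a prime `p`, each coefficient `(p!)²/((i!)² (p-i)!)` for `1 ≤ i ≤ p-1` is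
divisible by `p²`, the coefficient for `i = 0`, namely `p!`, is congruent to `-p`
modulo `p²`, and consequently `[(d/dx)^p, x^p] ≡ -p (mod p²)` in the ring of
differential operators on `ℤ[x]`. -/
theorem stmt2 (p : ℕ) [Fact p.Prime] :
    (∀ i : ℕ, 1 ≤ i → i ≤ p - 1 →
      (p ^ 2 : ℕ) ∣ p.factorial ^ 2 / (i.factorial ^ 2 * (p - i).factorial)) ∧
    ((p.factorial : ℤ) ≡ -(p : ℤ) [ZMOD (p ^ 2 : ℕ)]) ∧
    (∃ E : Module.End ℤ (Polynomial ℤ),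
      Dop ^ p * Xop ^ p - Xop ^ p * Dop ^ p = -((p : ℤ) • (1 : Module.End ℤ (Polynomial ℤ))) +
        (p ^ 2 : ℕ) • E) := by
  have hp : p.Prime := Fact.out
  have hp0 : 0 < p := hp.pos
  -- Wilson's theorem consequence: p² ∣ p! + p
  have hw : ((p : ℤ) ^ 2) ∣ (p.factorial : ℤ) + p := by
    have h1 : ((p : ℤ)) ∣ ((p - 1).factorial + 1 : ℤ) := by
      have hwl := ZMod.wilsons_lemma (p := p)
      have h0 : ((((p - 1).factorial : ℤ) + 1 : ℤ) : ZMod p) = 0 := by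
        push_cast [hwl]; ring
      exact_mod_cast (ZMod.intCast_zmod_eq_zero_iff_dvd _ _).mp h0
    obtain ⟨c, hc⟩ := h1
    refine ⟨c, ?_⟩
    have hfac : p * (p - 1).factorial = p.factorial := Nat.mul_factorial_pred hp0.ne'
    calc (p.factorial : ℤ) + p = p * (((p - 1).factorial : ℤ) + 1) := by
          rw [← hfac]; push_cast; ring
      _ = p * (p * c) := by rw [hc]
      _ = (p : ℤ) ^ 2 * c := by ring
  obtain ⟨m, hm⟩ := hw
  refine ⟨?_, ?_, ?_⟩
  · -- divisibility of the middle coefficients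
    intro i h1 h2
    have hip : i < p := by omega
    have hfac : p.choose i * i.factorial * (p - i).factorial = p.factorial :=
      Nat.choose_mul_factorial_mul_factorial hip.le
    have hpos : 0 < i.factorial ^ 2 * (p - i).factorial :=
      Nat.mul_pos (pow_pos i.factorial_pos 2) (p - i).factorial_pos
    have hmul : p.factorial ^ 2
        = (i.factorial ^ 2 * (p - i).factorial) * (p.choose i ^ 2 * (p - i).factorial) := by
      rw [← hfac]; ring
    rw [hmul, Nat.mul_div_cancel_left _ hpos]
    have hdvd : p ∣ p.choose i := hp.dvd_choose_self (by omega) hip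
    exact Dvd.dvd.mul_right (pow_dvd_pow_of_dvd hdvd 2) _
  · -- p! ≡ -p mod p²
    have h : (-(p : ℤ) - p.factorial) = ((p : ℤ) ^ 2) * (-m) := by linarith [hm]
    have hdvd : ((p ^ 2 : ℕ) : ℤ) ∣ (-(p : ℤ) - p.factorial) := by
      push_cast; exact ⟨-m, h⟩
    exact Int.modEq_iff_dvd.mpr hdvd
  · -- the operator congruence
    set q := p - 1 with hq
    have hpq : p = q + 1 := by omega
    have hexp := expand p
    rw [Finset.sum_range_succ'] at hexp
    have h0 : (p.choose 0 ^ 2 * Nat.factorial 0) • (Xop ^ (p - 0) * Dop ^ (p - 0))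
        = Xop ^ p * Dop ^ p := by simp
    rw [h0] at hexp
    have hcomm : Dop ^ p * Xop ^ p - Xop ^ p * Dop ^ p
        = ∑ i ∈ range p,
            (p.choose (i + 1) ^ 2 * (i + 1).factorial) •
              (Xop ^ (p - (i + 1)) * Dop ^ (p - (i + 1))) := by
      rw [hexp]; abel
    rw [show range p = range (q + 1) from by rw [← hpq], Finset.sum_range_succ] at hcomm
    have hlast : (p.choose (q + 1) ^ 2 * (q + 1).factorial) •
        (Xop ^ (p - (q + 1)) * Dop ^ (p - (q + 1)))
        = p.factorial • (1 : Module.End ℤ (Polynomial ℤ)) := by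
      rw [← hpq]; simp [Nat.choose_self]
    rw [hlast] at hcomm
    refine ⟨m • (1 : Module.End ℤ (Polynomial ℤ)) +
      ∑ i ∈ range q, ((p.choose (i + 1) / p) ^ 2 * (i + 1).factorial) •
        (Xop ^ (p - (i + 1)) * Dop ^ (p - (i + 1))), ?_⟩
    rw [hcomm, smul_add, Finset.smul_sum]
    have hfacsmul : p.factorial • (1 : Module.End ℤ (Polynomial ℤ))
        = -((p : ℤ) • (1 : Module.End ℤ (Polynomial ℤ)))
          + (p ^ 2 : ℕ) • (m • (1 : Module.End ℤ (Polynomial ℤ))) := by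
      rw [← Nat.cast_smul_eq_nsmul ℤ p.factorial, ← Nat.cast_smul_eq_nsmul ℤ (p ^ 2),
        smul_smul, ← neg_smul, ← add_smul]
      congr 1
      push_cast
      linarith [hm]
    have hterm : ∀ i ∈ range q,
        (p.choose (i + 1) ^ 2 * (i + 1).factorial) •
            (Xop ^ (p - (i + 1)) * Dop ^ (p - (i + 1)))
          = (p ^ 2 : ℕ) • (((p.choose (i + 1) / p) ^ 2 * (i + 1).factorial) •
              (Xop ^ (p - (i + 1)) * Dop ^ (p - (i + 1)))) := by
      intro i hi
      have hi' : i < q := Finset.mem_range.mp hi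
      have hdvd : p ∣ p.choose (i + 1) := hp.dvd_choose_self (by omega) (by omega)
      rw [smul_smul]
      congr 1
      have hb : p * (p.choose (i + 1) / p) = p.choose (i + 1) := Nat.mul_div_cancel' hdvd
      calc p.choose (i + 1) ^ 2 * (i + 1).factorial
          = (p * (p.choose (i + 1) / p)) ^ 2 * (i + 1).factorial := by rw [hb]
        _ = p ^ 2 * ((p.choose (i + 1) / p) ^ 2 * (i + 1).factorial) := by ring
    rw [Finset.sum_congr rfl hterm, hfacsmul]
    abel
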